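/- arXiv:2207.07807 — 4 statements merged into one kernel-verified Lean document; each statement's English description precedes it below -/
import Mathlib

section
/- Let $A = \bigoplus_{i \ge 0} A_i$ be a noetherian graded ring and $M$ a finitely generated graded $A$-module. The map $F : \operatorname{Ass}_A(M) \to \operatorname{Ass}_{A_0}(M)$ defined by $F(P) = P \cap A_0$ is well defined and surjective. -/
open RingTheory.Sequence

/-- The dimension of a module `M` over `R`: the Krull dimension of `R ⧸ Ann_R(M)`. -/
noncomputable def moduleDim (R M : Type*) [CommRing R] [AddCommGroup M] [Module R M] :
    WithBot ℕ∞ :=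
  ringKrullDim (R ⧸ Module.annihilator R M)

open Classical in
/-- The depth of a module `M` over a local ring `R`: `⊤` if `M = 0`, otherwise the
supremum of lengths of `M`-regular sequences contained in the maximal ideal. -/
noncomputable def moduleDepth (R M : Type*) [CommRing R] [IsLocalRing R]
    [AddCommGroup M] [Module R M] : ℕ∞ :=
  if Subsingleton M then ⊤
  else sSup {n : ℕ∞ | ∃ rs : List R, (rs.length : ℕ∞) = n ∧
    (∀ x ∈ rs, x ∈ IsLocalRing.maximalIdeal R) ∧ RingTheory.Sequence.IsRegular M rs}

open Classical in
/-- The codepth of a module over a local ring: `⊥` if `M = 0`, else `dim M - depth M`. -/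
noncomputable def moduleCodepth (R M : Type*) [CommRing R] [IsLocalRing R]
    [AddCommGroup M] [Module R M] : WithBot ℕ∞ :=
  if Subsingleton M then ⊥
  else (((moduleDim R M).unbotD 0 - moduleDepth R M : ℕ∞) : WithBot ℕ∞)

/-- A localized module `M_𝔭` is Cohen–Macaulay over `R_𝔭`. -/
noncomputable def isCMAt (R M : Type*) [CommRing R] [AddCommGroup M] [Module R M]
    (𝔭 : Ideal R) [𝔭.IsPrime] : Prop :=
  moduleDim (Localization.AtPrime 𝔭) (LocalizedModule 𝔭.primeCompl M)
    ≤ (moduleDepth (Localization.AtPrime 𝔭) (LocalizedModule 𝔭.primeCompl M) : WithBot ℕ∞)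

/-- The Cohen–Macaulay locus of a ring `R`. -/
noncomputable def cmRingLocus (R : Type*) [CommRing R] : Set (PrimeSpectrum R) :=
  {𝔭 | moduleDim (Localization.AtPrime 𝔭.asIdeal) (Localization.AtPrime 𝔭.asIdeal)
    ≤ (moduleDepth (Localization.AtPrime 𝔭.asIdeal) (Localization.AtPrime 𝔭.asIdeal) :
        WithBot ℕ∞)}

/-- The `n`-th codepth locus of a module. -/
noncomputable def codepthLocus (R M : Type*) [CommRing R] [AddCommGroup M] [Module R M]
    (n : ℕ) : Set (PrimeSpectrum R) :=
  {𝔭 | moduleCodepth (Localization.AtPrime 𝔭.asIdeal)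
        (LocalizedModule 𝔭.asIdeal.primeCompl M) ≤ (n : ℕ∞)}

/-- A ring is catenary if any two saturated chains of primes with the same endpoints
have the same length. -/
def IsCatenary (R : Type*) [CommRing R] : Prop :=
  ∀ c₁ c₂ : RelSeries {p : PrimeSpectrum R × PrimeSpectrum R | p.1 ⋖ p.2},
    c₁.head = c₂.head → c₁.last = c₂.last → c₁.length = c₂.length

open Classical in
/-- The grade of an ideal `J` on a module `M`. -/
noncomputable def moduleGrade {R : Type*} (M : Type*) [CommRing R] [AddCommGroup M]
    [Module R M] (J : Ideal R) : ℕ∞ :=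
  if J • (⊤ : Submodule R M) = ⊤ then ⊤
  else sSup {n : ℕ∞ | ∃ rs : List R, (rs.length : ℕ∞) = n ∧
    (∀ x ∈ rs, x ∈ J) ∧ RingTheory.Sequence.IsWeaklyRegular M rs}

/-- The Cohen–Macaulay locus of a module `M` over `R`. -/
noncomputable def cmLocus (R M : Type*) [CommRing R] [AddCommGroup M] [Module R M] :
    Set (PrimeSpectrum R) :=
  {𝔭 | moduleDim (Localization.AtPrime 𝔭.asIdeal) (LocalizedModule 𝔭.asIdeal.primeCompl M)
    ≤ (moduleDepth (Localization.AtPrime 𝔭.asIdeal)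
        (LocalizedModule 𝔭.asIdeal.primeCompl M) : WithBot ℕ∞)}

theorem stmt1
    (A₀ A M : Type*) [CommRing A₀] [CommRing A] [Algebra A₀ A]
    [IsNoetherianRing A₀] [IsNoetherianRing A]
    [AddCommGroup M] [Module A₀ M] [Module A M] [IsScalarTower A₀ A M]
    [Module.Finite A M]
    (𝒜 : ℕ → Submodule A₀ A) (ℳ : ℤ → Submodule A₀ M)
    (hinj : Function.Injective (algebraMap A₀ A))
    (hA : DirectSum.IsInternal 𝒜) (hA0 : 𝒜 0 = 1)
    (hAmul : ∀ i j : ℕ, 𝒜 i * 𝒜 j ≤ 𝒜 (i + j))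
    (hM : DirectSum.IsInternal ℳ)
    (hAM : ∀ (i : ℕ) (j : ℤ), ∀ a ∈ 𝒜 i, ∀ m ∈ ℳ j, a • m ∈ ℳ (i + j))
    :
    (∀ P ∈ associatedPrimes A M, P.comap (algebraMap A₀ A) ∈ associatedPrimes A₀ M) ∧
    (∀ 𝔭 ∈ associatedPrimes A₀ M,
      ∃ P ∈ associatedPrimes A M, P.comap (algebraMap A₀ A) = 𝔭) := by
  have smul_rw : ∀ (c : A₀) (y : M), c • y = (algebraMap A₀ A c) • y := fun c y =>
    (algebraMap_smul A c y).symm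
  constructor
  · rintro P hP'
    obtain ⟨hP, x, hx⟩ := isAssociatedPrime_iff.mp hP'
    rw [Submodule.bot_colon'] at hx
    subst hx
    haveI := hP
    refine isAssociatedPrime_iff.mpr ⟨Ideal.IsPrime.comap _, x, ?_⟩
    rw [Submodule.bot_colon']
    ext c
    simp only [Ideal.mem_comap, Submodule.mem_annihilator_span_singleton, algebraMap_smul]
  · rintro 𝔭 h𝔭'
    obtain ⟨h𝔭, m, hm⟩ := isAssociatedPrime_iff.mp h𝔭'
    rw [Submodule.bot_colon'] at hm
    subst hm
    set 𝔭 := (A₀ ∙ m).annihilator with h𝔭def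
    -- the set of annihilator ideals
    set S : Set (Ideal A) := {I | ∃ x : M, I = (A ∙ x).annihilator ∧
      (∀ c ∈ 𝔭, c • x = 0) ∧ (∀ s : A₀, s ∉ 𝔭 → s • x ≠ 0)} with hS
    have hmS : (A ∙ m).annihilator ∈ S := by
      refine ⟨m, rfl, fun c hc => ?_, fun s hs => ?_⟩
      · exact (Submodule.mem_annihilator_span_singleton _ _).mp hc
      · exact fun h => hs ((Submodule.mem_annihilator_span_singleton _ _).mpr h)
    obtain ⟨P, hPS, hPmax⟩ := (set_has_maximal_iff_noetherian.mpr inferInstance) S ⟨_, hmS⟩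
    obtain ⟨x, rfl, h1, h2⟩ := hPS
    have h1A : ∀ c ∈ 𝔭, (algebraMap A₀ A c) • x = 0 := fun c hc => by
      rw [← smul_rw]; exact h1 c hc
    -- maximality in convenient form
    have hmax : ∀ y : M, (∀ c ∈ 𝔭, c • y = 0) → (∀ s : A₀, s ∉ 𝔭 → s • y ≠ 0) →
        (A ∙ x).annihilator ≤ (A ∙ y).annihilator → (A ∙ y).annihilator = (A ∙ x).annihilator := by
      intro y hy1 hy2 hle
      by_contra hne
      exact hPmax _ ⟨y, rfl, hy1, hy2⟩ (lt_of_le_of_ne hle (Ne.symm hne))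
    have hone : (1 : A₀) ∉ 𝔭 := fun h => h𝔭.ne_top (Ideal.eq_top_iff_one _ |>.mpr h)
    have hxne : x ≠ 0 := fun h => h2 1 hone (by rw [h, smul_zero])
    -- key: for s ∉ 𝔭, ann(s•x) = ann(x)
    have hsx : ∀ s : A₀, s ∉ 𝔭 → (A ∙ s • x).annihilator = (A ∙ x).annihilator := by
      intro s hs
      refine hmax _ (fun c hc => ?_) (fun s' hs' => ?_) (fun t ht => ?_)
      · rw [smul_comm, h1 c hc, smul_zero]
      · rw [smul_comm, ← smul_assoc, smul_eq_mul]
        exact h2 _ (fun h => (h𝔭.mul_mem_iff_mem_or_mem.mp h).elim hs hs')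
      · rw [Submodule.mem_annihilator_span_singleton] at ht ⊢
        rw [smul_rw, smul_comm, ht, smul_zero]
    have hPprime : ((A ∙ x).annihilator).IsPrime := by
      constructor
      · rw [Ne, Ideal.eq_top_iff_one, Submodule.mem_annihilator_span_singleton, one_smul]
        exact hxne
      · intro a b hab
        by_contra hcon
        push_neg at hcon
        obtain ⟨ha, hb⟩ := hcon
        rw [Submodule.mem_annihilator_span_singleton] at hab ha hb
        -- C(a • x) third condition
        have hax2 : ∀ s : A₀, s ∉ 𝔭 → s • (a • x) ≠ 0 := by
          intro s hs hzero
          apply ha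
          rw [← Submodule.mem_annihilator_span_singleton (R := A), ← hsx s hs,
            Submodule.mem_annihilator_span_singleton]
          rw [smul_comm] at hzero
          exact hzero
        have hax1 : ∀ c ∈ 𝔭, c • (a • x) = 0 := fun c hc => by
          rw [smul_rw, smul_comm, ← smul_rw, h1 c hc, smul_zero]
        have hle : (A ∙ x).annihilator ≤ (A ∙ a • x).annihilator := by
          intro t ht
          rw [Submodule.mem_annihilator_span_singleton] at ht ⊢
          rw [smul_comm, ht, smul_zero]
        have := hmax _ hax1 hax2 hle
        apply hb
        rw [← Submodule.mem_annihilator_span_singleton (R := A), ← this,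
          Submodule.mem_annihilator_span_singleton, smul_smul, mul_comm, hab]
    refine ⟨_, isAssociatedPrime_iff.mpr ⟨hPprime, x, by rw [Submodule.bot_colon']⟩, ?_⟩
    ext c
    rw [Ideal.mem_comap, Submodule.mem_annihilator_span_singleton, ← smul_rw]
    constructor
    · intro h
      by_contra hc
      exact h2 c hc h
    · exact h1 c
end

section
/- Let $A = \bigoplus_{i \ge 0} A_i$ be a noetherian graded ring and $M = \bigoplus_{i \in \mathbb{Z}} M_i$ a finitely generated graded $A$-module. Then $\operatorname{Ass}_{A_0}(M) = \bigcup_{i \in \mathbb{Z}} \operatorname{Ass}_{A_0}(M_i)$, and this set is finite. -/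
open RingTheory.Sequence

/-- Associated primes of a module are associated primes of a submodule or of the quotient. -/
theorem assUnionAux {R M : Type*} [CommRing R] [AddCommGroup M] [Module R M]
    (N : Submodule R M) :
    associatedPrimes R M ⊆ associatedPrimes R N ∪ associatedPrimes R (M ⧸ N) := by
  exact associatedPrimes.subset_union_of_exact N.injective_subtype (LinearMap.exact_subtype_mkQ N)

/-- Bourbaki: if `M` is a finite module over a noetherian `A₀`-algebra `A`, then the set
of associated primes of `M` over `A₀` is finite. -/
theorem assFiniteAux (A₀ A M : Type*) [CommRing A₀] [CommRing A] [Algebra A₀ A]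
    [IsNoetherianRing A] [AddCommGroup M] [Module A₀ M] [Module A M]
    [IsScalarTower A₀ A M] [Module.Finite A M] :
    (associatedPrimes A₀ M).Finite := by
  classical
  have hbot : (associatedPrimes A₀ (⊥ : Submodule A M)).Finite := by
    haveI : Subsingleton ↥(⊥ : Submodule A M) :=
      ⟨fun a b => Subtype.ext (((Submodule.mem_bot A).mp a.2).trans
        ((Submodule.mem_bot A).mp b.2).symm)⟩
    rw [associatedPrimes.eq_empty_of_subsingleton]
    exact Set.finite_empty
  obtain ⟨N, hNfin, hmax⟩ := set_has_maximal_iff_noetherian.mpr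
    (inferInstance : IsNoetherian A M)
    {N : Submodule A M | (associatedPrimes A₀ N).Finite} ⟨⊥, hbot⟩
  rcases eq_or_ne N ⊤ with rfl | hNtop
  · have e : M ≃ₗ[A₀] (⊤ : Submodule A M) :=
      ((Submodule.topEquiv (R := A) (M := M)).restrictScalars A₀).symm
    rw [LinearEquiv.AssociatedPrimes.eq e]
    exact hNfin
  · exfalso
    haveI : Nontrivial (M ⧸ N) := Submodule.Quotient.nontrivial_iff.mpr hNtop
    obtain ⟨P, hP⟩ := associatedPrimes.nonempty A (M ⧸ N)
    obtain ⟨hPp, xb, hPeq⟩ := (isAssociatedPrime_iff (I := P) (M := M ⧸ N)).mp hP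
    have hxb : xb ≠ 0 := by
      rintro rfl
      refine hPp.ne_top ?_
      rw [hPeq, Submodule.colon_singleton_zero]
    obtain ⟨x, rfl⟩ := N.mkQ_surjective xb
    have hxN : x ∉ N := fun hmem =>
      hxb (by rw [Submodule.mkQ_apply, Submodule.Quotient.mk_eq_zero]; exact hmem)
    set N' : Submodule A M := N ⊔ (A ∙ x) with hN'def
    have hlt : N < N' := lt_of_le_of_ne le_sup_left
      (fun hEq => hxN (hEq ▸ Submodule.mem_sup_right (Submodule.mem_span_singleton_self x)))
    refine hmax N' ?_ hlt
    -- show `(associatedPrimes A₀ ↥N').Finite`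
    set g : N' →ₗ[A₀] M ⧸ N :=
      (N.mkQ.restrictScalars A₀).comp ((N'.subtype).restrictScalars A₀) with hg
    refine Set.Finite.subset (Set.Finite.union ?_ ?_) (assUnionAux (LinearMap.ker g))
    · -- associated primes of `ker g` are among those of `N`
      have hker : ∀ z : LinearMap.ker g, ((z : N') : M) ∈ N := by
        intro z
        have hz : g z.1 = 0 := z.2
        have : N.mkQ ((z.1 : M)) = 0 := hz
        rwa [Submodule.mkQ_apply, Submodule.Quotient.mk_eq_zero] at this
      let f : LinearMap.ker g →ₗ[A₀] N :=
        { toFun := fun z => ⟨((z : N') : M), hker z⟩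
          map_add' := fun a b => rfl
          map_smul' := fun a b => rfl }
      have hfinj : Function.Injective f := by
        intro a b hab
        have h' := congrArg Subtype.val hab
        exact Subtype.ext (Subtype.ext h')
      exact Set.Finite.subset hNfin (associatedPrimes.subset_of_injective hfinj)
    · -- associated primes of `N' ⧸ ker g` : only the contraction of `P`
      rw [LinearEquiv.AssociatedPrimes.eq g.quotKerEquivRange]
      refine Set.Finite.subset (Set.finite_singleton (P.comap (algebraMap A₀ A))) ?_
      rintro p ⟨hp, y, rfl⟩
      obtain ⟨z, hz⟩ := y.2
      obtain ⟨n, hn, w, hw, hzs⟩ := Submodule.mem_sup.mp z.2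
      obtain ⟨a, rfl⟩ := Submodule.mem_span_singleton.mp hw
      have hy : (y : M ⧸ N) = a • N.mkQ x := by
        have : g z = N.mkQ (z : M) := rfl
        rw [← hz, this, ← hzs, map_add, map_smul]
        rw [show N.mkQ n = 0 by rw [Submodule.mkQ_apply, Submodule.Quotient.mk_eq_zero]; exact hn]
        rw [zero_add]
      have hyne : y ≠ 0 := by
        rintro rfl
        refine hp.ne_top ?_
        rw [Submodule.colon_singleton_zero, Ideal.radical_top]
      have haP : a ∉ P := by
        intro haP
        refine hyne (Subtype.ext ?_)
        have : a • N.mkQ x = 0 := by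
          rw [← Submodule.mem_bot A, ← Submodule.mem_colon_singleton, ← hPeq]; exact haP
        rw [hy, this]; rfl
      refine Set.mem_singleton_iff.mpr ?_
      ext c
      rw [Ideal.mem_radical_iff, Ideal.mem_comap]
      have hcy : ∀ d : A₀, d • y = 0 ↔ (algebraMap A₀ A d * a) • N.mkQ x = 0 := by
        intro d
        rw [Subtype.ext_iff]
        have h1 : ((d • y : LinearMap.range g) : M ⧸ N) = d • (y : M ⧸ N) := rfl
        rw [h1, hy, show ((0 : LinearMap.range g) : M ⧸ N) = 0 from rfl,
          ← algebraMap_smul A d (a • N.mkQ x), smul_smul]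
      have hP' : ∀ b : A, b ∈ P ↔ b • N.mkQ x = 0 := fun b => by
        rw [hPeq, Submodule.mem_colon_singleton, Submodule.mem_bot]
      simp_rw [Submodule.mem_colon_singleton, Submodule.mem_bot, hcy, ← hP', map_pow]
      constructor
      · rintro ⟨n, hmem⟩
        rcases hPp.mem_or_mem hmem with h1 | h2
        · exact hPp.mem_of_pow_mem n h1
        · exact absurd h2 haP
      · intro hmem
        exact ⟨1, by rw [pow_one]; exact P.mul_mem_right a hmem⟩

theorem stmt2
    (A₀ A M : Type*) [CommRing A₀] [CommRing A] [Algebra A₀ A]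
    [IsNoetherianRing A₀] [IsNoetherianRing A]
    [AddCommGroup M] [Module A₀ M] [Module A M] [IsScalarTower A₀ A M]
    [Module.Finite A M]
    (𝒜 : ℕ → Submodule A₀ A) (ℳ : ℤ → Submodule A₀ M)
    (hinj : Function.Injective (algebraMap A₀ A))
    (hA : DirectSum.IsInternal 𝒜) (hA0 : 𝒜 0 = 1)
    (hAmul : ∀ i j : ℕ, 𝒜 i * 𝒜 j ≤ 𝒜 (i + j))
    (hM : DirectSum.IsInternal ℳ)
    (hAM : ∀ (i : ℕ) (j : ℤ), ∀ a ∈ 𝒜 i, ∀ m ∈ ℳ j, a • m ∈ ℳ (i + j))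
    :
    associatedPrimes A₀ M = (⋃ i : ℤ, associatedPrimes A₀ (ℳ i)) ∧
    (associatedPrimes A₀ M).Finite := by
  classical
  constructor
  · apply Set.Subset.antisymm
    · intro p hp0
      obtain ⟨hp, x, rfl⟩ := (isAssociatedPrime_iff (M := M)).mp hp0
      set e : (DirectSum ℤ fun i => ℳ i) ≃ₗ[A₀] M :=
        LinearEquiv.ofBijective (DirectSum.coeLinearMap ℳ) hM with he
      set c : DirectSum ℤ fun i => ℳ i := e.symm x with hc
      have hx : e c = x := e.apply_symm_apply x
      have key : ∀ a : A₀, a • x = 0 ↔ ∀ j, a • c j = 0 := by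
        intro a
        rw [← hx, ← map_smul, e.map_eq_zero_iff]
        constructor
        · intro h j
          rw [← DirectSum.smul_apply, h]
          exact DirectSum.zero_apply j
        · intro h
          refine DFinsupp.ext fun j => ?_
          rw [DirectSum.smul_apply, DirectSum.zero_apply]
          exact h j
      have hjex : ∃ j ∈ c.support, (⊥ : Submodule A₀ ↥(ℳ j)).colon {c j} ≤ (⊥ : Submodule A₀ M).colon {x} := by
        rw [← Ideal.IsPrime.inf_le' hp]
        intro a ha
        rw [Submodule.mem_colon_singleton, Submodule.mem_bot, key]
        intro j
        by_cases hj : j ∈ c.support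
        · have h2 : a ∈ (⊥ : Submodule A₀ ↥(ℳ j)).colon {c j} :=
            Finset.inf_le (f := fun j => (⊥ : Submodule A₀ ↥(ℳ j)).colon {c j}) hj ha
          rwa [Submodule.mem_colon_singleton, Submodule.mem_bot] at h2
        · rw [DFinsupp.notMem_support_iff.mp hj, smul_zero]
      obtain ⟨j, _, hj⟩ := hjex
      refine Set.mem_iUnion.mpr ⟨j, (isAssociatedPrime_iff (M := ℳ j)).mpr ⟨hp, c j, le_antisymm ?_ hj⟩⟩
      intro a ha
      rw [Submodule.mem_colon_singleton, Submodule.mem_bot] at ha ⊢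
      exact (key a).mp ha j
    · intro p hp
      obtain ⟨i, hi⟩ := Set.mem_iUnion.mp hp
      exact hi.map_of_injective ((ℳ i).subtype) (Submodule.injective_subtype _)
  · exact assFiniteAux A₀ A M
end

section
/- Let $A = \bigoplus_{i \ge 0} A_i$ be a noetherian graded ring and $M$ a finitely generated graded $A$-module. Let $\mathfrak{p}$ be a prime ideal of $A_0$ and suppose $\mathbf{x} = x_1, \ldots, x_n$ is a sequence of elements of $\mathfrak{p}$ that is an $M_\mathfrak{p}$-regular sequence (where $M_\mathfrak{p}$ denotes localization at the multiplicative set $A_0 \setminus \mathfrak{p}$). Then there exists $f \in A_0 \setminus \mathfrak{p}$ such that $\mathbf{x}$ is an $M_f$-regular sequence. -/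
open RingTheory.Sequence

section AuxStmt7
open Submodule LocalizedModule Pointwise

section Aux
variable {A₀ : Type*} [CommRing A₀]

private lemma mk_eq_zero_iff' {M : Type*} [AddCommGroup M] [Module A₀ M] {S : Submonoid A₀}
    (m : M) (s : S) : (LocalizedModule.mk m s : LocalizedModule S M) = 0 ↔
      ∃ u : S, (u : A₀) • m = 0 := by
  rw [show (0 : LocalizedModule S M) = LocalizedModule.mk 0 1 from (LocalizedModule.zero_mk 1).symm, LocalizedModule.mk_eq]
  constructor
  · rintro ⟨u, hu⟩; refine ⟨u, ?_⟩; simpa [Submonoid.smul_def] using hu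
  · rintro ⟨u, hu⟩; refine ⟨u, ?_⟩; simpa [Submonoid.smul_def] using hu

private lemma mem_pointwise_smul_top_iff {M : Type*} [AddCommGroup M] [Module A₀ M] (x : A₀) (m : M) :
    m ∈ x • (⊤ : Submodule A₀ M) ↔ ∃ n, x • n = m := by
  rw [← SetLike.mem_coe, Submodule.coe_pointwise_smul, Set.mem_smul_set]
  simp

private lemma quot_equiv {M N : Type*} [AddCommGroup M] [Module A₀ M]
    [AddCommGroup N] [Module A₀ N] (S : Submonoid A₀) (x : A₀)
    (π : M →ₗ[A₀] N) (hsurj : Function.Surjective π)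
    (hker : LinearMap.ker π = x • (⊤ : Submodule A₀ M)) :
    Nonempty (QuotSMulTop x (LocalizedModule S M) ≃ₗ[A₀] LocalizedModule S N) := by
  set χ : LocalizedModule S M →ₗ[A₀] LocalizedModule S N :=
    (LocalizedModule.map S π).restrictScalars A₀ with hχ
  have hχmk : ∀ (m : M) (s : S), χ (LocalizedModule.mk m s) = LocalizedModule.mk (π m) s := by
    intro m s
    simp [hχ, LocalizedModule.map_mk]
  have hN : ∀ n : N, x • n = 0 := by
    intro n
    obtain ⟨m, rfl⟩ := hsurj n
    rw [← map_smul]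
    rw [← LinearMap.mem_ker, hker]
    exact Submodule.smul_mem_pointwise_smul _ _ _ Submodule.mem_top
  have hN' : ∀ z : LocalizedModule S N, x • z = 0 := by
    intro z
    induction z using LocalizedModule.induction_on with
    | _ n s => rw [LocalizedModule.smul'_mk, hN, LocalizedModule.zero_mk]
  have hle : x • (⊤ : Submodule A₀ (LocalizedModule S M)) ≤ LinearMap.ker χ := by
    intro z hz
    obtain ⟨w, rfl⟩ := (mem_pointwise_smul_top_iff x z).mp hz
    rw [LinearMap.mem_ker, map_smul]
    exact hN' _
  have hker' : LinearMap.ker χ ≤ x • (⊤ : Submodule A₀ (LocalizedModule S M)) := by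
    intro z
    induction z using LocalizedModule.induction_on with
    | _ m s =>
      intro hz
      rw [LinearMap.mem_ker, hχmk] at hz
      obtain ⟨u, hu⟩ := (mk_eq_zero_iff' _ _).mp hz
      rw [← map_smul, ← LinearMap.mem_ker, hker, mem_pointwise_smul_top_iff] at hu
      obtain ⟨m', hm'⟩ := hu
      have : (LocalizedModule.mk m s : LocalizedModule S M) =
          x • LocalizedModule.mk m' (u * s) := by
        rw [LocalizedModule.smul'_mk, LocalizedModule.mk_eq]
        refine ⟨1, ?_⟩
        rw [hm']
        simp only [Submonoid.smul_def, Submonoid.coe_mul, one_smul]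
        rw [mul_smul, smul_comm]
      rw [this]
      exact Submodule.smul_mem_pointwise_smul _ _ _ Submodule.mem_top
  refine ⟨LinearEquiv.ofBijective (Submodule.liftQ _ χ hle) ⟨?_, ?_⟩⟩
  · rw [← LinearMap.ker_eq_bot, Submodule.ker_liftQ_eq_bot]
    exact hker'
  · intro z
    induction z using LocalizedModule.induction_on with
    | _ n s =>
      obtain ⟨m, rfl⟩ := hsurj n
      exact ⟨Submodule.Quotient.mk (LocalizedModule.mk m s), by rw [Submodule.liftQ_apply, hχmk]⟩

end Aux

section Aux2
variable {A₀ : Type*} [CommRing A₀]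

private lemma smulRegular_of_kills {M : Type*} [AddCommGroup M] [Module A₀ M]
    (x f₀ f : A₀) (hkill : ∀ m : M, x • m = 0 → f₀ • m = 0) (hdvd : f₀ ∣ f) :
    IsSMulRegular (LocalizedModule (Submonoid.powers f) M) x := by
  obtain ⟨c, rfl⟩ := hdvd
  have key : ∀ v : LocalizedModule (Submonoid.powers (f₀ * c)) M, x • v = 0 → v = 0 := by
    intro v
    induction v using LocalizedModule.induction_on with
    | _ m s =>
      intro hv
      rw [LocalizedModule.smul'_mk] at hv
      obtain ⟨u, hu⟩ := (mk_eq_zero_iff' _ _).mp hv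
      obtain ⟨n, hn⟩ := u.2
      have h1 : x • ((u : A₀) • m) = 0 := by rw [smul_comm]; exact hu
      have h2 : f₀ • (u : A₀) • m = 0 := hkill _ h1
      have h3 : ((f₀ * c) ^ (n + 1) : A₀) • m = 0 := by
        have : ((f₀ * c) ^ (n + 1) : A₀) = c * (f₀ * (f₀ * c) ^ n) := by ring
        rw [this, mul_smul, ← hn] at *
        rw [mul_smul]
        rw [h2, smul_zero]
      exact (mk_eq_zero_iff' m s).mpr ⟨⟨(f₀ * c) ^ (n + 1), ⟨n + 1, rfl⟩⟩, h3⟩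
  intro z w h
  have h' : x • z = x • w := h
  have := key (z - w) (by rw [smul_sub, h', sub_self])
  exact sub_eq_zero.mp this

private lemma nontrivial_transfer {M : Type*} [AddCommGroup M] [Module A₀ M]
    (𝔭 : Ideal A₀) [𝔭.IsPrime] {f : A₀} (hf : f ∉ 𝔭)
    (h : ∃ z : LocalizedModule 𝔭.primeCompl M, z ≠ 0) :
    ∃ z : LocalizedModule (Submonoid.powers f) M, z ≠ 0 := by
  obtain ⟨z, hz⟩ := h
  induction z using LocalizedModule.induction_on with
  | _ m s =>
    refine ⟨LocalizedModule.mk m 1, fun h0 => hz ?_⟩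
    obtain ⟨u, hu⟩ := (mk_eq_zero_iff' _ _).mp h0
    obtain ⟨k, hk⟩ := u.2
    have hfk : (u : A₀) ∈ 𝔭.primeCompl := by
      rw [← hk]; exact pow_mem hf k
    exact (mk_eq_zero_iff' m s).mpr ⟨⟨u, hfk⟩, hu⟩

private lemma isRegular_map_iff {R' P : Type*} [CommRing R'] [Algebra A₀ R'] [AddCommGroup P]
    [Module A₀ P] [Module R' P] [IsScalarTower A₀ R' P] (rs : List A₀) :
    IsRegular P (rs.map (algebraMap A₀ R')) ↔ IsRegular P rs := by
  rw [isRegular_iff, isRegular_iff, isWeaklyRegular_map_algebraMap_iff]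
  refine and_congr_right' (not_congr ?_)
  rw [← Submodule.restrictScalars_inj A₀ R', ← Ideal.map_ofList, Ideal.smul_restrictScalars,
    Submodule.restrictScalars_top]

end Aux2

universe w

section Key
variable {A₀ A : Type*} [CommRing A₀] [CommRing A] [Algebra A₀ A] [IsNoetherianRing A]

private lemma key (𝔭 : Ideal A₀) [𝔭.IsPrime] :
    ∀ (rs : List A₀) (M : Type w) [AddCommGroup M] [Module A₀ M] [Module A M]
      [IsScalarTower A₀ A M] [Module.Finite A M],
      IsRegular (LocalizedModule 𝔭.primeCompl M) rs →
      ∃ f : A₀, f ∉ 𝔭 ∧ ∀ g ∉ 𝔭,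
        IsRegular (LocalizedModule (Submonoid.powers (f * g)) M) rs := by
  intro rs
  induction rs with
  | nil =>
    intro M _ _ _ _ _ hreg
    have hnz : ∃ z : LocalizedModule 𝔭.primeCompl M, z ≠ 0 := by
      by_contra hcon
      push_neg at hcon
      refine hreg.top_ne_smul ?_
      rw [Ideal.ofList_nil, bot_smul]
      ext z
      simp [hcon z]
    refine ⟨1, (Ideal.ne_top_iff_one 𝔭).mp (Ideal.IsPrime.ne_top ‹_›), fun g hg => ?_⟩
    obtain ⟨z, hz⟩ := nontrivial_transfer 𝔭 (show (1 : A₀) * g ∉ 𝔭 by simpa using hg) hnz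
    refine ⟨IsWeaklyRegular.nil _ _, ?_⟩
    rw [Ideal.ofList_nil, bot_smul]
    intro hbot
    exact hz (by simpa using (hbot ▸ Submodule.mem_top : z ∈ (⊥ : Submodule A₀ _)))
  | cons x rs ih =>
    intro M _ _ _ _ _ hreg
    rw [isRegular_cons_iff] at hreg
    obtain ⟨hx, hquot⟩ := hreg
    set pA : Submodule A M := LinearMap.range (LinearMap.lsmul A M (algebraMap A₀ A x)) with hpA
    set π : M →ₗ[A₀] (M ⧸ pA) := pA.mkQ.restrictScalars A₀ with hπ
    have hπsurj : Function.Surjective π := Submodule.mkQ_surjective pA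
    have hπker : LinearMap.ker π = x • (⊤ : Submodule A₀ M) := by
      ext m
      simp only [hπ, LinearMap.mem_ker, LinearMap.restrictScalars_apply, Submodule.mkQ_apply,
        Submodule.Quotient.mk_eq_zero, hpA, LinearMap.mem_range, LinearMap.lsmul_apply]
      rw [mem_pointwise_smul_top_iff]
      constructor
      · rintro ⟨m', hm'⟩
        exact ⟨m', by rw [← hm', algebraMap_smul]⟩
      · rintro ⟨m', hm'⟩
        exact ⟨m', by rw [algebraMap_smul]; exact hm'⟩
    obtain ⟨e𝔭⟩ := quot_equiv 𝔭.primeCompl x π hπsurj hπker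
    have hquot' : IsRegular (LocalizedModule 𝔭.primeCompl (M ⧸ pA)) rs :=
      (e𝔭.isRegular_congr rs).mp hquot
    obtain ⟨f₂, hf₂, hrec⟩ := ih (M ⧸ pA) hquot'
    have hKfg : (LinearMap.ker (LinearMap.lsmul A M (algebraMap A₀ A x))).FG :=
      (isNoetherian_def.mp inferInstance) _
    obtain ⟨T, hT⟩ := hKfg
    have hTmem : ∀ t ∈ T, ∃ s : 𝔭.primeCompl, (s : A₀) • t = 0 := by
      intro t ht
      have hxt : x • t = 0 := by
        have hmem : t ∈ LinearMap.ker (LinearMap.lsmul A M (algebraMap A₀ A x)) :=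
          hT ▸ Submodule.subset_span ht
        rw [LinearMap.mem_ker, LinearMap.lsmul_apply, algebraMap_smul] at hmem
        exact hmem
      have h0 : x • (LocalizedModule.mk t 1 : LocalizedModule 𝔭.primeCompl M) = 0 := by
        rw [LocalizedModule.smul'_mk, hxt, LocalizedModule.zero_mk]
      have hz := hx (show x • (LocalizedModule.mk t 1 : LocalizedModule 𝔭.primeCompl M)
          = x • 0 by rw [h0, smul_zero])
      exact (mk_eq_zero_iff' t 1).mp hz
    choose σ hσ using hTmem
    set f₁ : A₀ := ∏ t ∈ T.attach, (σ t.1 t.2 : A₀) with hf₁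
    have hf₁mem : f₁ ∈ 𝔭.primeCompl :=
      Submonoid.prod_mem _ (fun t _ => (σ t.1 t.2).2)
    have hkill : ∀ m : M, x • m = 0 → f₁ • m = 0 := by
      intro m hm
      have hmK : m ∈ Submodule.span A (↑T : Set M) := by
        rw [hT]
        rw [LinearMap.mem_ker, LinearMap.lsmul_apply, algebraMap_smul]
        exact hm
      clear hm
      induction hmK using Submodule.span_induction with
      | mem t ht =>
        obtain ⟨c, hc⟩ := Finset.dvd_prod_of_mem (fun t : {z // z ∈ T} => (σ t.1 t.2 : A₀))
          (Finset.mem_attach T ⟨t, ht⟩)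
        rw [hf₁, hc, mul_comm, mul_smul, hσ t ht, smul_zero]
      | zero => rw [smul_zero]
      | add a b _ _ iha ihb => rw [smul_add, iha, ihb, add_zero]
      | smul a n _ ihn =>
        rw [← algebraMap_smul A f₁ (a • n), smul_comm, algebraMap_smul A f₁ n, ihn, smul_zero]
    refine ⟨f₁ * f₂, fun hmem => ?_, fun g hg => ?_⟩
    · rcases (Ideal.IsPrime.mem_or_mem ‹_› hmem) with h | h
      · exact hf₁mem h
      · exact hf₂ h
    · rw [isRegular_cons_iff]
      refine ⟨smulRegular_of_kills x f₁ (f₁ * f₂ * g) hkill ⟨f₂ * g, by ring⟩, ?_⟩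
      have hfg : f₁ * g ∉ 𝔭 := fun hmem => by
        rcases Ideal.IsPrime.mem_or_mem ‹_› hmem with h | h
        · exact hf₁mem h
        · exact hg h
      have h2 := hrec (f₁ * g) hfg
      have heq : f₂ * (f₁ * g) = f₁ * f₂ * g := by ring
      rw [heq] at h2
      obtain ⟨e⟩ := quot_equiv (Submonoid.powers (f₁ * f₂ * g)) x π hπsurj hπker
      exact (e.isRegular_congr rs).mpr h2

end Key

end AuxStmt7

theorem stmt7
    (A₀ A M : Type*) [CommRing A₀] [CommRing A] [Algebra A₀ A]
    [IsNoetherianRing A₀] [IsNoetherianRing A]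
    [AddCommGroup M] [Module A₀ M] [Module A M] [IsScalarTower A₀ A M]
    [Module.Finite A M]
    (𝒜 : ℕ → Submodule A₀ A) (ℳ : ℤ → Submodule A₀ M)
    (hinj : Function.Injective (algebraMap A₀ A))
    (hA : DirectSum.IsInternal 𝒜) (hA0 : 𝒜 0 = 1)
    (hAmul : ∀ i j : ℕ, 𝒜 i * 𝒜 j ≤ 𝒜 (i + j))
    (hM : DirectSum.IsInternal ℳ)
    (hAM : ∀ (i : ℕ) (j : ℤ), ∀ a ∈ 𝒜 i, ∀ m ∈ ℳ j, a • m ∈ ℳ (i + j))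
    (𝔭 : Ideal A₀) [𝔭.IsPrime]
    (rs : List A₀) (hrs : ∀ x ∈ rs, x ∈ 𝔭)
    (hreg : RingTheory.Sequence.IsRegular (LocalizedModule 𝔭.primeCompl M)
      (rs.map (algebraMap A₀ (Localization 𝔭.primeCompl)))) :
    ∃ f : A₀, f ∉ 𝔭 ∧ RingTheory.Sequence.IsRegular (LocalizedModule (Submonoid.powers f) M)
      (rs.map (algebraMap A₀ (Localization (Submonoid.powers f)))) := by
  have hreg' : IsRegular (LocalizedModule 𝔭.primeCompl M) rs := (isRegular_map_iff rs).mp hreg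
  obtain ⟨f, hf, h⟩ := key (A := A) 𝔭 rs M hreg'
  have h1 := h 1 ((Ideal.ne_top_iff_one 𝔭).mp (Ideal.IsPrime.ne_top ‹_›))
  rw [mul_one] at h1
  exact ⟨f, hf, (isRegular_map_iff rs).mpr h1⟩
end

section
/- Let $R$ be a noetherian ring and $\{U_n^t\}_{n \ge 0, t \in \mathbb{Z}}$ a family of open subsets of $\operatorname{Spec}(R)$ such that $U_n^t \subseteq U_n^{t+1}$ and $U_n^t \subseteq U_{n+1}^t$ for all $t \in \mathbb{Z}$ and $n \ge 0$. Then there exists an integer $k$ such that $U_n^t = U_n^k$ for all $t \ge k$ and all $n \ge 0$. -/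
open RingTheory.Sequence

theorem stmt9 (R : Type*) [CommRing R] [IsNoetherianRing R]
    (U : ℕ → ℤ → Set (PrimeSpectrum R))
    (hopen : ∀ (n : ℕ) (t : ℤ), IsOpen (U n t))
    (h1 : ∀ (n : ℕ) (t : ℤ), U n t ⊆ U n (t + 1))
    (h2 : ∀ (n : ℕ) (t : ℤ), U n t ⊆ U (n + 1) t) :
    ∃ k : ℤ, ∀ t : ℤ, k ≤ t → ∀ n : ℕ, U n t = U n k := by
  set O : ℕ → ℤ → TopologicalSpace.Opens (PrimeSpectrum R) :=
    fun n t => ⟨U n t, hopen n t⟩ with hO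
  have hwf : WellFounded ((· > ·) : TopologicalSpace.Opens (PrimeSpectrum R) →
      TopologicalSpace.Opens (PrimeSpectrum R) → Prop) :=
    (inferInstance : TopologicalSpace.NoetherianSpace (PrimeSpectrum R)).wf
  -- monotonicity in t
  have hmonT : ∀ n, Monotone (fun t => O n t) := by
    intro n s t hst
    have : ∀ m : ℕ, O n s ≤ O n (s + m) := by
      intro m
      induction m with
      | zero => simp
      | succ m ih =>
        refine ih.trans ?_
        have := h1 n (s + m)
        rw [Nat.cast_succ, ← add_assoc]
        exact this
    have hm := this (t - s).toNat
    rwa [Int.toNat_of_nonneg (by omega), add_sub_cancel] at hm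
  have hmonN : ∀ t, Monotone (fun n => O n t) := by
    intro t
    apply monotone_nat_of_le_succ
    intro n
    exact h2 n t
  -- maximal element of range
  obtain ⟨V, ⟨N, k0, rfl⟩, hmax⟩ := hwf.has_min
    {V | ∃ n t, V = O n t} ⟨O 0 0, 0, 0, rfl⟩
  -- for each n, stabilization point ≥ k0
  have hstab : ∀ n : ℕ, ∃ c : ℤ, k0 ≤ c ∧ ∀ t, c ≤ t → O n t = O n c := by
    intro n
    have := (wellFoundedGT_iff_monotone_chain_condition.mp ⟨hwf⟩)
      ⟨fun j => O n (k0 + j), fun a b hab => hmonT n (by exact_mod_cast by omega)⟩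
    obtain ⟨J, hJ⟩ := this
    refine ⟨k0 + J, by omega, fun t ht => ?_⟩
    have h := hJ (t - k0).toNat (by omega)
    change O n (k0 + (J : ℤ)) = O n (k0 + (((t - k0).toNat : ℕ) : ℤ)) at h
    rw [Int.toNat_of_nonneg (by omega)] at h
    rw [show k0 + (t - k0) = t by omega] at h
    exact h.symm
  choose c hc1 hc2 using hstab
  -- key: for n ≥ N, t ≥ k0: O n t = O N k0
  have hbig : ∀ n, N ≤ n → ∀ t, k0 ≤ t → O n t = O N k0 := by
    intro n hn t ht
    have hle : O N k0 ≤ O n t := (hmonN k0 hn).trans (hmonT n ht)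
    have := hmax (O n t) ⟨n, t, rfl⟩
    exact le_antisymm (by by_contra h; exact this (lt_of_le_of_ne hle (fun e => h e.ge))) hle
  refine ⟨Finset.fold max k0 c (Finset.range N), fun t ht n => ?_⟩
  set K := Finset.fold max k0 c (Finset.range N) with hK
  have hk0K : k0 ≤ K := by
    rw [hK, Finset.le_fold_max]; exact Or.inl le_rfl
  have key : ∀ n, O n t = O n K := by
    intro m
    rcases lt_or_ge m N with hm | hm
    · have hcK : c m ≤ K := by
        rw [hK, Finset.le_fold_max]
        exact Or.inr ⟨m, Finset.mem_range.mpr hm, le_rfl⟩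
      rw [hc2 m t (by omega), hc2 m K hcK]
    · rw [hbig m hm t (by omega), hbig m hm K (by omega)]
  have := key n
  exact congrArg TopologicalSpace.Opens.carrier this
end
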